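/- Let d ≥ 1 be an integer, ε > 0, β ∈ (0, 1], and let m and s be positive integers. Consider the mechanism that on input x ∈ ({0,1}^d)^* samples ω uniformly from {m, 2m, ..., sm}, samples η₁, ..., η_d independently from the discrete Laplace distribution Lap_ℤ(d/ε), and outputs (⌊sum(x)_i + ω + η_i⌋_{ms})_{i=1}^d. Then P[‖output − sum(x)‖_∞ > 1 + (d/ε)·ln(d/β) + 2ms] ≤ β. -/

import Mathlib

open scoped ENNReal

/-- `rdown k z` rounds the integer `z` down to the nearest multiple of `k`. -/
def rdown (k : ℕ) (z : ℤ) : ℤ := z - z % (k : ℤ)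

/-- The coordinatewise sum of the entries of a database `x ∈ ({0,1}^d)^*`. -/
def dbSum {d : ℕ} (x : List (Fin d → Bool)) (i : Fin d) : ℤ :=
  (x.map fun row => if row i then (1 : ℤ) else 0).sum

private lemma tsum_pi_prod {α : Type*} :
    ∀ (n : ℕ) (f : Fin n → α → ℝ≥0∞),
      (∑' y : Fin n → α, ∏ i, f i (y i)) = ∏ i, ∑' a, f i a := by
  intro n
  induction n with
  | zero =>
    intro f
    simp only [Finset.univ_eq_empty, Finset.prod_empty]
    exact tsum_eq_single (default : Fin 0 → α)
      (fun b hb => absurd (Subsingleton.elim b default) hb) |>.trans rfl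
  | succ n ih =>
    intro f
    calc (∑' y : Fin (n+1) → α, ∏ i, f i (y i))
        = ∑' p : α × (Fin n → α), ∏ i, f i ((Fin.cons p.1 p.2 : Fin (n+1) → α) i) := by
          rw [← (Fin.consEquiv (fun _ : Fin (n+1) => α)).tsum_eq
            (fun y => ∏ i, f i (y i))]
          exact tsum_congr fun p => by simp
      _ = ∑' (a : α) (y : Fin n → α), ∏ i, f i ((Fin.cons a y : Fin (n+1) → α) i) := ENNReal.tsum_prod (f := fun a y => ∏ i, f i ((Fin.cons a y : Fin (n+1) → α) i))
      _ = ∑' (a : α) (y : Fin n → α), f 0 a * ∏ i : Fin n, f i.succ (y i) := by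
          refine tsum_congr fun a => tsum_congr fun y => ?_
          rw [Fin.prod_univ_succ]
          simp
      _ = (∑' a, f 0 a) * ∏ i : Fin n, ∑' b, f i.succ b := by
          simp only [ENNReal.tsum_mul_left]
          rw [ENNReal.tsum_mul_right, ih]
      _ = ∏ i : Fin (n+1), ∑' a, f i a := by rw [Fin.prod_univ_succ]

private lemma geom_tail (c q : ℝ) (hc0 : 0 ≤ c) (hq0 : 0 < q) (hq1 : q < 1) (n₀ : ℕ) :
    (∑' n : ℕ, if n₀ ≤ n then ENNReal.ofReal (c * q ^ n) else 0)
      = ENNReal.ofReal (c * q ^ n₀ * (1 - q)⁻¹) := by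
  rw [← Summable.sum_add_tsum_nat_add' (f := fun n => if n₀ ≤ n then ENNReal.ofReal (c * q ^ n) else 0)
    (k := n₀) ENNReal.summable]
  have h0 : (∑ i ∈ Finset.range n₀, if n₀ ≤ i then ENNReal.ofReal (c * q ^ i) else 0) = 0 :=
    Finset.sum_eq_zero fun i hi => by
      rw [if_neg]
      simp only [Finset.mem_range] at hi
      omega
  rw [h0, zero_add]
  have h2 : ∀ n : ℕ, (if n₀ ≤ n + n₀ then ENNReal.ofReal (c * q ^ (n + n₀)) else 0)
      = ENNReal.ofReal (c * q ^ n₀ * q ^ n) := fun n => by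
    rw [if_pos (Nat.le_add_left n₀ n), pow_add]
    congr 1
    ring
  rw [tsum_congr h2, ← ENNReal.ofReal_tsum_of_nonneg (fun n => by positivity)
    ((summable_geometric_of_lt_one hq0.le hq1).mul_left _)]
  congr 1
  rw [tsum_mul_left, tsum_geometric_of_lt_one hq0.le hq1]

set_option maxHeartbeats 1000000 in
private lemma lap_tail (d : ℕ) (hd : 1 ≤ d) (ε β : ℝ) (hε : 0 < ε) (hβ0 : 0 < β) (hβ : β ≤ 1)
    (L : PMF ℤ)
    (hL : ∀ x : ℤ, L x = ENNReal.ofReal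
      ((Real.exp (1 / ((d : ℝ) / ε)) - 1) / (Real.exp (1 / ((d : ℝ) / ε)) + 1) *
        Real.exp (-|(x : ℝ)| / ((d : ℝ) / ε)))) :
    (∑' η : ℤ, if 1 + ((d : ℝ) / ε) * Real.log ((d : ℝ) / β) < |(η : ℝ)| then L η else 0)
      ≤ ENNReal.ofReal (β / d) := by
  have hd0 : (0:ℝ) < d := by exact_mod_cast hd
  set t : ℝ := (d : ℝ) / ε with htdef
  have ht0 : 0 < t := div_pos hd0 hε
  set E : ℝ := Real.exp (1 / t) with hEdef
  set q : ℝ := Real.exp (-1 / t) with hqdef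
  have hq0 : 0 < q := Real.exp_pos _
  have hq1 : q < 1 := by
    rw [hqdef]
    exact Real.exp_lt_one_iff.mpr (div_neg_of_neg_of_pos (by norm_num) ht0)
  have hE1 : 1 < E := by
    rw [hEdef]
    exact Real.one_lt_exp_iff.mpr (by positivity)
  have hE0 : (0:ℝ) < E := lt_trans one_pos hE1
  have hqE : E * q = 1 := by
    have h : 1/t + (-1/t) = 0 := by ring
    rw [hEdef, hqdef, ← Real.exp_add, h, Real.exp_zero]
  have hq_eq : q = E⁻¹ := by
    have := hqE
    field_simp at this ⊢
    linarith [this]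
  set A : ℝ := 1 + t * Real.log ((d:ℝ)/β) with hAdef
  have hlog0 : 0 ≤ Real.log ((d:ℝ)/β) :=
    Real.log_nonneg ((one_le_div hβ0).mpr (hβ.trans (by exact_mod_cast hd)))
  have hA0 : 0 ≤ A := hAdef ▸ add_nonneg zero_le_one (mul_nonneg ht0.le hlog0)
  set c : ℝ := (E - 1)/(E + 1) with hcdef
  have hc0 : 0 ≤ c := div_nonneg (by linarith) (by linarith)
  set n₀ : ℕ := ⌊A⌋₊ + 1 with hn₀
  have hLq : ∀ η : ℤ, L η = ENNReal.ofReal (c * q ^ η.natAbs) := by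
    intro η
    rw [hL η]
    congr 2
    have h1 : -|(η:ℝ)| / t = (η.natAbs : ℝ) * (-1 / t) := by
      rw [Nat.cast_natAbs, Int.cast_abs]; ring
    rw [h1, Real.exp_nat_mul, ← hqdef]
  have hcond : ∀ η : ℤ, (A < |(η:ℝ)|) ↔ n₀ ≤ η.natAbs := by
    intro η
    rw [show |(η:ℝ)| = ((η.natAbs : ℕ) : ℝ) from by rw [Nat.cast_natAbs, Int.cast_abs],
      ← Nat.floor_lt hA0]
    omega
  set G : ℕ → ℝ≥0∞ := fun n => if n₀ ≤ n then ENNReal.ofReal (c * q ^ n) else 0 with hG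
  have hsplit : (∑' η : ℤ, if A < |(η:ℝ)| then L η else 0)
      = (∑' n : ℕ, G n) + ∑' n : ℕ, G (n + 1) := by
    rw [tsum_of_nat_of_neg_add_one ENNReal.summable ENNReal.summable]
    congr 1
    · refine tsum_congr fun n => ?_
      rw [hLq]
      simp only [hcond, hG, Int.natAbs_natCast]
    · refine tsum_congr fun n => ?_
      rw [hLq]
      have h2 : ((-((n:ℤ)+1) : ℤ)).natAbs = n + 1 := by omega
      simp only [hcond, hG, h2]
  have hG1 : (∑' n : ℕ, G (n+1)) ≤ ∑' n : ℕ, G n :=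
    Summable.tsum_le_tsum_of_inj (fun n => n + 1) (fun a b h => by simpa using h) (fun c _ => zero_le)
      (fun n => le_rfl) ENNReal.summable ENNReal.summable
  have hGsum : (∑' n : ℕ, G n) = ENNReal.ofReal (c * q ^ n₀ * (1 - q)⁻¹) := by
    simp only [hG]
    exact geom_tail c q hc0 hq0 hq1 n₀
  have hEne : E - 1 ≠ 0 := by linarith
  have hEne' : E + 1 ≠ 0 := by linarith
  have hEne0 : E ≠ 0 := by linarith
  have hstep : 2 * (c * q ^ n₀ * (1 - q)⁻¹) ≤ q ^ ⌊A⌋₊ := by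
    have h1 : c * q ^ n₀ * (1 - q)⁻¹ = q ^ ⌊A⌋₊ * (1/(E+1)) := by
      rw [hn₀, pow_succ, hq_eq, hcdef]
      rw [show (1 - E⁻¹) = (E-1)/E by field_simp]
      field_simp
    rw [h1]
    have h2 : 2 * (q ^ ⌊A⌋₊ * (1/(E+1))) = q ^ ⌊A⌋₊ * (2/(E+1)) := by ring
    rw [h2]
    calc q ^ ⌊A⌋₊ * (2/(E+1)) ≤ q ^ ⌊A⌋₊ * 1 := by
          apply mul_le_mul_of_nonneg_left _ (pow_nonneg hq0.le _)
          rw [div_le_one (by linarith)]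
          linarith
      _ = q ^ ⌊A⌋₊ := mul_one _
  have hlast : q ^ ⌊A⌋₊ ≤ β / d := by
    have hk : t * Real.log ((d:ℝ)/β) ≤ (⌊A⌋₊:ℝ) := by
      have h3 := Nat.lt_floor_add_one A
      rw [hAdef] at h3
      linarith
    calc q ^ ⌊A⌋₊ = Real.exp ((⌊A⌋₊:ℝ) * (-1/t)) := by
          rw [Real.exp_nat_mul, ← hqdef]
      _ ≤ Real.exp (-Real.log ((d:ℝ)/β)) := by
          apply Real.exp_le_exp.mpr
          have h4 : Real.log ((d:ℝ)/β) ≤ (⌊A⌋₊:ℝ)/t := by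
            rw [le_div_iff₀ ht0]
            linarith [hk]
          have h5 : (⌊A⌋₊:ℝ) * (-1/t) = -((⌊A⌋₊:ℝ)/t) := by ring
          rw [h5, neg_le_neg_iff]
          exact h4
      _ = β / d := by
          rw [Real.exp_neg, Real.exp_log (by positivity), inv_div]
  calc (∑' η : ℤ, if A < |(η:ℝ)| then L η else 0)
      = (∑' n : ℕ, G n) + ∑' n : ℕ, G (n + 1) := hsplit
    _ ≤ (∑' n : ℕ, G n) + ∑' n : ℕ, G n := add_le_add_right hG1 _
    _ = 2 * ∑' n : ℕ, G n := (two_mul _).symm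
    _ = ENNReal.ofReal (2 * (c * q ^ n₀ * (1 - q)⁻¹)) := by
        rw [hGsum, ENNReal.ofReal_mul (by norm_num : (0:ℝ) ≤ 2), ENNReal.ofReal_ofNat]
    _ ≤ ENNReal.ofReal (β / d) := ENNReal.ofReal_le_ofReal (le_trans hstep hlast)

private lemma rdown_close (m s : ℕ) (hm : 0 < m) (hs : 0 < s) (j : ℕ)
    (hj1 : 1 ≤ j) (hjs : j ≤ s) (c η v : ℤ)
    (h : rdown (m * s) (c + (j : ℤ) * (m : ℤ) + η) = v) :
    |v - c| ≤ |η| + 2 * ((m : ℤ) * (s : ℤ)) := by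
  have hms : (0:ℤ) < ((m*s : ℕ) : ℤ) := by positivity
  set z : ℤ := c + (j:ℤ)*(m:ℤ) + η with hz
  have hr0 : 0 ≤ z % ((m*s:ℕ):ℤ) := Int.emod_nonneg z (by omega)
  have hr1 : z % ((m*s:ℕ):ℤ) < ((m*s:ℕ):ℤ) := Int.emod_lt_of_pos z hms
  have hv : v - c = η + ((j:ℤ)*(m:ℤ) - z % ((m*s:ℕ):ℤ)) := by
    rw [← h]
    simp only [rdown]
    ring
  have hjm0 : (0:ℤ) ≤ (j:ℤ)*(m:ℤ) := by positivity
  have hjm : (j:ℤ)*(m:ℤ) ≤ ((m*s:ℕ):ℤ) := by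
    push_cast
    have hj' : (j:ℤ) ≤ (s:ℤ) := by exact_mod_cast hjs
    have hm' : (0:ℤ) ≤ (m:ℤ) := by positivity
    nlinarith
  have hcast : ((m*s:ℕ):ℤ) = (m:ℤ) * (s:ℤ) := by push_cast; ring
  have hb : |(j:ℤ)*(m:ℤ) - z % ((m*s:ℕ):ℤ)| ≤ (m:ℤ) * (s:ℤ) := by
    rw [abs_le]
    constructor <;> [linarith [hcast]; linarith [hcast]]
  calc |v - c| = |η + ((j:ℤ)*(m:ℤ) - z % ((m*s:ℕ):ℤ))| := by rw [hv]
    _ ≤ |η| + |(j:ℤ)*(m:ℤ) - z % ((m*s:ℕ):ℤ)| := abs_add_le _ _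
    _ ≤ |η| + 2 * ((m:ℤ) * (s:ℤ)) := by nlinarith [hb]

set_option maxHeartbeats 1000000 in
/-- Accuracy of the randomized-shift-and-round discrete Laplace mechanism: the
mechanism that samples `ω` uniform on `{m, 2m, …, sm}`, samples `η₁, …, η_d` i.i.d.
`Lap_ℤ(d/ε)`, and outputs `(⌊sum(x)_i + ω + η_i⌋_{ms})_i`, satisfies
`P[‖output − sum(x)‖_∞ > 1 + (d/ε) ln(d/β) + 2ms] ≤ β`. -/
theorem stmt17 (d : ℕ) (hd : 1 ≤ d) (ε β : ℝ) (hε : 0 < ε) (hβ0 : 0 < β) (hβ : β ≤ 1)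
    (m s : ℕ) (hm : 0 < m) (hs : 0 < s)
    (L : PMF ℤ)
    (hL : ∀ x : ℤ, L x = ENNReal.ofReal
      ((Real.exp (1 / ((d : ℝ) / ε)) - 1) / (Real.exp (1 / ((d : ℝ) / ε)) + 1) *
        Real.exp (-|(x : ℝ)| / ((d : ℝ) / ε))))
    (x : List (Fin d → Bool))
    (M : PMF (Fin d → ℤ))
    (hM : ∀ y : Fin d → ℤ, M y = (s : ℝ≥0∞)⁻¹ * ∑ j ∈ Finset.Icc 1 s, ∏ i,
      ∑' η : ℤ,
        if rdown (m * s) (dbSum x i + (j : ℤ) * (m : ℤ) + η) = y i then L η else 0) :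
    M.toOuterMeasure
        {y : Fin d → ℤ | ∃ i,
          1 + ((d : ℝ) / ε) * Real.log ((d : ℝ) / β) + 2 * (m : ℝ) * (s : ℝ)
            < |((y i - dbSum x i : ℤ) : ℝ)|}
      ≤ ENNReal.ofReal β := by
  classical
  set A : ℝ := 1 + ((d : ℝ) / ε) * Real.log ((d : ℝ) / β) with hAdef
  set T : ℝ := A + 2 * (m : ℝ) * (s : ℝ) with hTdef
  set S : Set (Fin d → ℤ) := {y | ∃ i, T < |((y i - dbSum x i : ℤ) : ℝ)|} with hS
  set f : ℕ → Fin d → ℤ → ℝ≥0∞ := fun j i v =>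
    ∑' η : ℤ, if rdown (m * s) (dbSum x i + (j : ℤ) * (m : ℤ) + η) = v then L η else 0 with hf
  -- total mass of each f j i is 1
  have htotal : ∀ (j : ℕ) (i : Fin d), (∑' v : ℤ, f j i v) = 1 := by
    intro j i
    simp only [hf]
    rw [ENNReal.tsum_comm]
    calc (∑' (η : ℤ) (v : ℤ),
          if rdown (m * s) (dbSum x i + (j : ℤ) * (m : ℤ) + η) = v then L η else 0)
        = ∑' η : ℤ, L η := by
          refine tsum_congr fun η => ?_
          exact (tsum_eq_single (rdown (m * s) (dbSum x i + (j : ℤ) * (m : ℤ) + η))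
            (fun b hb => if_neg fun hcontr => hb hcontr.symm)).trans (if_pos rfl)
      _ = 1 := L.tsum_coe
  -- tail bound for each coordinate
  have htail : ∀ j ∈ Finset.Icc 1 s, ∀ i : Fin d,
      (∑' v : ℤ, if T < |((v - dbSum x i : ℤ) : ℝ)| then f j i v else 0)
        ≤ ENNReal.ofReal (β / d) := by
    intro j hj i
    obtain ⟨hj1, hjs⟩ := Finset.mem_Icc.mp hj
    have step1 : (∑' v : ℤ, if T < |((v - dbSum x i : ℤ) : ℝ)| then f j i v else 0)
        = ∑' η : ℤ,
            (if T < |((rdown (m * s) (dbSum x i + (j : ℤ) * (m : ℤ) + η) - dbSum x i : ℤ) : ℝ)|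
              then L η else 0) := by
      calc (∑' v : ℤ, if T < |((v - dbSum x i : ℤ) : ℝ)| then f j i v else 0)
          = ∑' (v : ℤ) (η : ℤ), (if T < |((v - dbSum x i : ℤ) : ℝ)| then
              (if rdown (m * s) (dbSum x i + (j : ℤ) * (m : ℤ) + η) = v then L η else 0)
              else 0) := by
            refine tsum_congr fun v => ?_
            split_ifs with h
            · rfl
            · exact tsum_zero.symm
        _ = ∑' (η : ℤ) (v : ℤ), (if T < |((v - dbSum x i : ℤ) : ℝ)| then
              (if rdown (m * s) (dbSum x i + (j : ℤ) * (m : ℤ) + η) = v then L η else 0)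
              else 0) := ENNReal.tsum_comm
        _ = _ := by
            refine tsum_congr fun η => ?_
            rw [tsum_eq_single (rdown (m * s) (dbSum x i + (j : ℤ) * (m : ℤ) + η))]
            · split_ifs with h1 h2 <;> first | rfl | exact absurd rfl h2
            · intro b hb
              have hz : (if rdown (m * s) (dbSum x i + (j : ℤ) * (m : ℤ) + η) = b
                  then L η else (0:ℝ≥0∞)) = 0 := if_neg fun hcontr => hb hcontr.symm
              rw [hz, ite_self]
    rw [step1]
    refine le_trans (Summable.tsum_le_tsum (fun η => ?_) ENNReal.summable ENNReal.summable)
      (lap_tail d hd ε β hε hβ0 hβ L hL)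
    by_cases hcase :
      T < |((rdown (m * s) (dbSum x i + (j : ℤ) * (m : ℤ) + η) - dbSum x i : ℤ) : ℝ)|
    · have hb := rdown_close m s hm hs j hj1 hjs (dbSum x i) η _ rfl
      have hbr : |((rdown (m * s) (dbSum x i + (j : ℤ) * (m : ℤ) + η) - dbSum x i : ℤ) : ℝ)|
          ≤ |(η : ℝ)| + 2 * ((m : ℝ) * (s : ℝ)) := by exact_mod_cast hb
      have hAη : A < |(η : ℝ)| := by
        rw [hTdef] at hcase
        linarith [hbr]
      rw [if_pos hcase, if_pos hAη]
    · rw [if_neg hcase]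
      exact zero_le
  -- per-j bound
  have hjbound : ∀ j ∈ Finset.Icc 1 s,
      (∑' y : Fin d → ℤ, S.indicator (fun y => ∏ i, f j i (y i)) y) ≤ ENNReal.ofReal β := by
    intro j hj
    have hub : ∀ y : Fin d → ℤ, S.indicator (fun y => ∏ i, f j i (y i)) y
        ≤ ∑ i₀ : Fin d,
            (if T < |((y i₀ - dbSum x i₀ : ℤ) : ℝ)| then ∏ i, f j i (y i) else 0) := by
      intro y
      by_cases hy : y ∈ S
      · rw [Set.indicator_of_mem hy]
        obtain ⟨i₀, hi₀⟩ := hy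
        calc (∏ i, f j i (y i))
            = (if T < |((y i₀ - dbSum x i₀ : ℤ) : ℝ)| then ∏ i, f j i (y i) else 0) :=
              (if_pos hi₀).symm
          _ ≤ _ := Finset.single_le_sum (f := fun i₀ =>
              (if T < |((y i₀ - dbSum x i₀ : ℤ) : ℝ)| then ∏ i, f j i (y i) else 0))
              (fun i _ => zero_le) (Finset.mem_univ i₀)
      · rw [Set.indicator_of_notMem hy]
        exact zero_le
    refine le_trans (Summable.tsum_le_tsum hub ENNReal.summable ENNReal.summable) ?_
    rw [Summable.tsum_finsetSum (fun i _ => ENNReal.summable)]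
    have hi₀bound : ∀ i₀ : Fin d,
        (∑' y : Fin d → ℤ,
            if T < |((y i₀ - dbSum x i₀ : ℤ) : ℝ)| then ∏ i, f j i (y i) else 0)
          ≤ ENNReal.ofReal (β / d) := by
      intro i₀
      set g : Fin d → ℤ → ℝ≥0∞ := fun i v =>
        if i = i₀ then (if T < |((v - dbSum x i₀ : ℤ) : ℝ)| then f j i v else 0) else f j i v
        with hg
      have hgy : ∀ y : Fin d → ℤ,
          (if T < |((y i₀ - dbSum x i₀ : ℤ) : ℝ)| then ∏ i, f j i (y i) else 0)
            = ∏ i, g i (y i) := by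
        intro y
        by_cases hcase : T < |((y i₀ - dbSum x i₀ : ℤ) : ℝ)|
        · rw [if_pos hcase]
          refine Finset.prod_congr rfl fun i _ => ?_
          by_cases hi : i = i₀
          · subst hi
            simp only [hg, if_pos rfl, if_pos hcase]
          · simp only [hg, if_neg hi]
        · rw [if_neg hcase]
          symm
          refine Finset.prod_eq_zero (Finset.mem_univ i₀) ?_
          simp only [hg, if_pos rfl, if_neg hcase]
      rw [tsum_congr hgy, tsum_pi_prod]
      calc (∏ i, ∑' v : ℤ, g i v)
          = ∑' v : ℤ, g i₀ v := by
            refine Finset.prod_eq_single i₀ (fun b _ hb => ?_) (fun h => absurd (Finset.mem_univ i₀) h)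
            simp only [hg, if_neg hb]
            exact htotal j b
        _ ≤ ENNReal.ofReal (β / d) := by
            have := htail j hj i₀
            simpa only [hg, if_pos rfl] using this
    calc (∑ i₀ : Fin d, ∑' y : Fin d → ℤ,
          if T < |((y i₀ - dbSum x i₀ : ℤ) : ℝ)| then ∏ i, f j i (y i) else 0)
        ≤ ∑ _i₀ : Fin d, ENNReal.ofReal (β / d) :=
          Finset.sum_le_sum fun i₀ _ => hi₀bound i₀
      _ = (d : ℝ≥0∞) * ENNReal.ofReal (β / d) := by
          rw [Finset.sum_const, Finset.card_univ, Fintype.card_fin, nsmul_eq_mul]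
      _ = ENNReal.ofReal β := by
          have hd0 : (0:ℝ) < d := by exact_mod_cast hd
          rw [← ENNReal.ofReal_natCast d, ← ENNReal.ofReal_mul (by positivity)]
          congr 1
          field_simp
  -- assemble
  rw [PMF.toOuterMeasure_apply]
  have hMrw : ∀ y : Fin d → ℤ, S.indicator (⇑M) y
      = (s : ℝ≥0∞)⁻¹ * ∑ j ∈ Finset.Icc 1 s, S.indicator (fun y => ∏ i, f j i (y i)) y := by
    intro y
    by_cases hy : y ∈ S
    · simp only [Set.indicator_of_mem hy]
      rw [hM y]
    · simp only [Set.indicator_of_notMem hy, Finset.sum_const_zero, mul_zero]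
  calc (∑' y : Fin d → ℤ, S.indicator (⇑M) y)
      = ∑' y : Fin d → ℤ, (s : ℝ≥0∞)⁻¹ *
          ∑ j ∈ Finset.Icc 1 s, S.indicator (fun y => ∏ i, f j i (y i)) y := tsum_congr hMrw
    _ = (s : ℝ≥0∞)⁻¹ * ∑' y : Fin d → ℤ,
          ∑ j ∈ Finset.Icc 1 s, S.indicator (fun y => ∏ i, f j i (y i)) y :=
        ENNReal.tsum_mul_left
    _ = (s : ℝ≥0∞)⁻¹ * ∑ j ∈ Finset.Icc 1 s,
          ∑' y : Fin d → ℤ, S.indicator (fun y => ∏ i, f j i (y i)) y := by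
        rw [Summable.tsum_finsetSum (fun j _ => ENNReal.summable)]
    _ ≤ (s : ℝ≥0∞)⁻¹ * ∑ _j ∈ Finset.Icc 1 s, ENNReal.ofReal β :=
        mul_le_mul_right (Finset.sum_le_sum hjbound) _
    _ = (s : ℝ≥0∞)⁻¹ * ((s : ℝ≥0∞) * ENNReal.ofReal β) := by
        rw [Finset.sum_const, Nat.card_Icc, nsmul_eq_mul]
        norm_num
    _ = ENNReal.ofReal β := by
        rw [← mul_assoc, ENNReal.inv_mul_cancel (by exact_mod_cast hs.ne')
          (ENNReal.natCast_ne_top s), one_mul]
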